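/- arXiv:2109.13152 — 2 statements merged into one kernel-verified Lean document; each statement's English description precedes it below -/
import Mathlib

section
/- Let σ ∈ M_n(ℂ) be positive definite with trace 1. For any density matrices ρ₁, ρ₂ (positive semidefinite, trace 1), ‖ρ₁ - ρ₂‖₁ ≤ ‖σ^{1/4}(σ^{-1/4}√ρ₁ σ^{-1/4} - σ^{-1/4}√ρ₂ σ^{-1/4})σ^{1/4}‖₂ · ‖√ρ₁ + √ρ₂‖₂, where ‖·‖₁ and ‖·‖₂ are the trace norm and Hilbert–Schmidt norm. -/
open Matrix
open scoped ComplexOrder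

/-- Real powers of a Hermitian matrix, via its spectral decomposition. -/
noncomputable def mpow {n : ℕ} {σ : Matrix (Fin n) (Fin n) ℂ} (hσ : σ.IsHermitian)
    (t : ℝ) : Matrix (Fin n) (Fin n) ℂ :=
  (hσ.eigenvectorUnitary : Matrix (Fin n) (Fin n) ℂ) *
    Matrix.diagonal (fun i => ((hσ.eigenvalues i ^ t : ℝ) : ℂ)) *
    (star hσ.eigenvectorUnitary : Matrix (Fin n) (Fin n) ℂ)

/-- The positive semidefinite square root of a positive semidefinite matrix
(the definition `Matrix.PosSemidef.sqrt` of the older Mathlib, since removed). -/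
noncomputable def Matrix.PosSemidef.sqrt {n 𝕜 : Type*} [Fintype n] [RCLike 𝕜] [DecidableEq n]
    {A : Matrix n n 𝕜} (hA : A.PosSemidef) : Matrix n n 𝕜 :=
  hA.1.eigenvectorUnitary.1 * diagonal ((↑) ∘ (·.sqrt) ∘ hA.1.eigenvalues) *
    (star hA.1.eigenvectorUnitary : Matrix n n 𝕜)

/-- The trace (Schatten-1) norm `‖A‖₁ = Tr √(A* A)`. -/
noncomputable def traceNorm {n : ℕ} (A : Matrix (Fin n) (Fin n) ℂ) : ℝ :=
  ((Matrix.posSemidef_conjTranspose_mul_self A).sqrt.trace).re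

/-- The Hilbert–Schmidt (Schatten-2) norm `‖A‖₂ = √(Tr (A* A))`. -/
noncomputable def hsNorm {n : ℕ} (A : Matrix (Fin n) (Fin n) ℂ) : ℝ :=
  Real.sqrt ((Aᴴ * A).trace.re)

/- ---------- Auxiliary lemmas ---------- -/

lemma psd_sqrt_eq_cfc {n : ℕ} {A : Matrix (Fin n) (Fin n) ℂ} (hA : A.PosSemidef) :
    hA.sqrt = cfc Real.sqrt A := by
  rw [hA.1.cfc_eq, IsHermitian.cfc, Unitary.conjStarAlgAut_apply]
  rfl

lemma psd_spec_nonneg {n : ℕ} {A : Matrix (Fin n) (Fin n) ℂ} (hA : A.PosSemidef) :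
    ∀ x ∈ spectrum ℝ A, 0 ≤ x := by
  rw [hA.1.spectrum_real_eq_range_eigenvalues]
  rintro _ ⟨i, rfl⟩
  exact hA.eigenvalues_nonneg i

lemma Matrix.PosSemidef.sqrt_mul_self {n : ℕ} {A : Matrix (Fin n) (Fin n) ℂ}
    (hA : A.PosSemidef) : hA.sqrt * hA.sqrt = A := by
  rw [psd_sqrt_eq_cfc, ← cfc_mul Real.sqrt Real.sqrt A]
  conv_rhs => rw [← cfc_id' ℝ A hA.1.isSelfAdjoint]
  exact cfc_congr fun x hx => Real.mul_self_sqrt (psd_spec_nonneg hA x hx)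

lemma Matrix.PosSemidef.eq_sqrt_of_sq_eq {n : ℕ} {A : Matrix (Fin n) (Fin n) ℂ}
    (hA : A.PosSemidef) (B : Matrix (Fin n) (Fin n) ℂ) (hB : A ^ 2 = B)
    {hB' : B.PosSemidef} : A = hB'.sqrt := by
  subst hB
  rw [psd_sqrt_eq_cfc, ← cfc_comp_pow Real.sqrt 2 A (ha := hA.1.isSelfAdjoint)]
  conv_lhs => rw [← cfc_id' ℝ A hA.1.isSelfAdjoint]
  exact cfc_congr fun x hx => (Real.sqrt_sq (psd_spec_nonneg hA x hx)).symm

lemma trace_hs_entries {n : ℕ} (A : Matrix (Fin n) (Fin n) ℂ) :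
    (Aᴴ * A).trace.re = ∑ j, ∑ i, Complex.normSq (A i j) := by
  simp only [Matrix.trace, Matrix.diag, Matrix.mul_apply, Matrix.conjTranspose_apply,
    Complex.normSq_eq_conj_mul_self]
  rw [Complex.re_sum]
  refine Finset.sum_congr rfl fun j _ => ?_
  rw [Complex.re_sum]
  refine Finset.sum_congr rfl fun i _ => ?_
  simp [← Complex.normSq_eq_conj_mul_self]

lemma hsNorm_eq {n : ℕ} (A : Matrix (Fin n) (Fin n) ℂ) :
    hsNorm A = Real.sqrt (∑ j, ∑ i, Complex.normSq (A i j)) := by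
  rw [hsNorm, trace_hs_entries]

/-- Cauchy–Schwarz / Hölder step: the sum of absolute values of the diagonal entries of
`Vᴴ (X Y) V` is bounded by `‖X‖₂ ‖Y‖₂`, for `V` unitary. -/
lemma sum_abs_diag_le {n : ℕ} (V X Y : Matrix (Fin n) (Fin n) ℂ)
    (hV : V * Vᴴ = 1) :
    ∑ i, ‖(Vᴴ * (X * Y) * V) i i‖ ≤ hsNorm X * hsNorm Y := by
  have hgroup : Vᴴ * (X * Y) * V = (Vᴴ * X) * (Y * V) := by
    simp only [Matrix.mul_assoc]
  set P := Vᴴ * X with hP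
  set Q := Y * V with hQ
  have step1 : ∀ i, ‖(Vᴴ * (X * Y) * V) i i‖ ≤
      ∑ k, ‖P i k‖ * ‖Q k i‖ := by
    intro i
    rw [hgroup, Matrix.mul_apply]
    refine (norm_sum_le _ _).trans ?_
    refine le_of_eq (Finset.sum_congr rfl fun k _ => ?_)
    exact norm_mul _ _
  have step2 : ∑ i, ∑ k, ‖P i k‖ * ‖Q k i‖ ≤
      hsNorm P * hsNorm Q := by
    have hprod : ∑ i, ∑ k, ‖P i k‖ * ‖Q k i‖ =
        ∑ p ∈ Finset.univ ×ˢ (Finset.univ : Finset (Fin n)),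
          ‖P p.1 p.2‖ * ‖Q p.2 p.1‖ := by
      rw [Finset.sum_product]
    rw [hprod]
    refine (Real.sum_mul_le_sqrt_mul_sqrt _ _ _).trans (le_of_eq ?_)
    congr 1
    · rw [hsNorm_eq]
      congr 1
      rw [Finset.sum_product]
      rw [Finset.sum_comm]
      refine Finset.sum_congr rfl fun j _ => Finset.sum_congr rfl fun i _ => ?_
      rw [Complex.sq_norm]
    · rw [hsNorm_eq]
      congr 1
      rw [Finset.sum_product]
      refine Finset.sum_congr rfl fun i _ => Finset.sum_congr rfl fun j _ => ?_
      rw [Complex.sq_norm]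
  have hPX : hsNorm P = hsNorm X := by
    rw [hsNorm, hsNorm]
    congr 2
    rw [hP, Matrix.conjTranspose_mul, Matrix.conjTranspose_conjTranspose,
      Matrix.mul_assoc, ← Matrix.mul_assoc V Vᴴ X, hV, Matrix.one_mul]
  have hQY : hsNorm Q = hsNorm Y := by
    rw [hsNorm, hsNorm]
    congr 2
    rw [hQ, Matrix.conjTranspose_mul]
    have : Vᴴ * Yᴴ * (Y * V) = Vᴴ * (Yᴴ * Y) * V := by
      simp only [Matrix.mul_assoc]
    rw [this, Matrix.trace_mul_cycle, ← Matrix.mul_assoc, hV, Matrix.one_mul]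
  calc ∑ i, ‖(Vᴴ * (X * Y) * V) i i‖
      ≤ ∑ i, ∑ k, ‖P i k‖ * ‖Q k i‖ :=
        Finset.sum_le_sum fun i _ => step1 i
    _ ≤ hsNorm P * hsNorm Q := step2
    _ = hsNorm X * hsNorm Y := by rw [hPX, hQY]

/-- The trace norm of a Hermitian matrix is the sum of the absolute values of its
eigenvalues. -/
lemma traceNorm_eq_sum_abs_eigenvalues {n : ℕ} {D : Matrix (Fin n) (Fin n) ℂ}
    (hD : D.IsHermitian) :
    traceNorm D = ∑ i, |hD.eigenvalues i| := by
  set V : Matrix (Fin n) (Fin n) ℂ := (hD.eigenvectorUnitary : Matrix (Fin n) (Fin n) ℂ)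
    with hVdef
  have hV2 : Vᴴ * V = 1 := by
    rw [← Matrix.star_eq_conjTranspose]; exact Unitary.coe_star_mul_self _
  have hV1 : V * Vᴴ = 1 := by
    rw [← Matrix.star_eq_conjTranspose]; exact Unitary.coe_mul_star_self _
  set R : Matrix (Fin n) (Fin n) ℂ :=
    V * Matrix.diagonal (fun i => ((|hD.eigenvalues i| : ℝ) : ℂ)) * Vᴴ with hRdef
  have hRpsd : R.PosSemidef := by
    refine Matrix.PosSemidef.mul_mul_conjTranspose_same ?_ V
    refine Matrix.posSemidef_diagonal_iff.mpr fun i => ?_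
    exact_mod_cast abs_nonneg _
  have hconj : ∀ M N : Matrix (Fin n) (Fin n) ℂ,
      (V * M * Vᴴ) * (V * N * Vᴴ) = V * (M * N) * Vᴴ := by
    intro M N
    calc (V * M * Vᴴ) * (V * N * Vᴴ) = V * (M * ((Vᴴ * V) * (N * Vᴴ))) := by
          simp only [Matrix.mul_assoc]
      _ = V * (M * N) * Vᴴ := by rw [hV2, Matrix.one_mul]; simp only [Matrix.mul_assoc]
  have hspec : D = V * Matrix.diagonal (fun i => ((hD.eigenvalues i : ℝ) : ℂ)) * Vᴴ := by
    rw [← Matrix.star_eq_conjTranspose]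
    exact hD.spectral_theorem
  have hsq : R ^ 2 = Dᴴ * D := by
    rw [hD.eq, pow_two, hRdef, hconj, Matrix.diagonal_mul_diagonal]
    conv_rhs => rw [hspec, hconj, Matrix.diagonal_mul_diagonal]
    have heq : (fun i => ((|hD.eigenvalues i| : ℝ) : ℂ) * ((|hD.eigenvalues i| : ℝ) : ℂ)) =
        (fun i => ((hD.eigenvalues i : ℝ) : ℂ) * ((hD.eigenvalues i : ℝ) : ℂ)) := by
      funext i
      rw [← Complex.ofReal_mul, ← Complex.ofReal_mul, abs_mul_abs_self]
    rw [heq]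
  have hR : R = (Matrix.posSemidef_conjTranspose_mul_self D).sqrt :=
    hRpsd.eq_sqrt_of_sq_eq _ hsq
  rw [traceNorm, ← hR, hRdef, Matrix.trace_mul_cycle, hV2,
    Matrix.one_mul, Matrix.trace_diagonal]
  rw [Complex.re_sum]
  simp

/-- Products of `mpow`s with opposite exponents cancel. -/
lemma mpow_mul_mpow_neg {n : ℕ} {σ : Matrix (Fin n) (Fin n) ℂ} (hσ : σ.PosDef) (t : ℝ) :
    mpow hσ.1 t * mpow hσ.1 (-t) = 1 := by
  set V : Matrix (Fin n) (Fin n) ℂ := (hσ.1.eigenvectorUnitary : Matrix (Fin n) (Fin n) ℂ)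
  have hV2 : star V * V = 1 := Unitary.coe_star_mul_self _
  have hV1 : V * star V = 1 := Unitary.coe_mul_star_self _
  rw [mpow, mpow]
  calc (V * Matrix.diagonal (fun i => ((hσ.1.eigenvalues i ^ t : ℝ) : ℂ)) * star V) *
        (V * Matrix.diagonal (fun i => ((hσ.1.eigenvalues i ^ (-t) : ℝ) : ℂ)) * star V)
      = V * (Matrix.diagonal (fun i => ((hσ.1.eigenvalues i ^ t : ℝ) : ℂ)) *
          ((star V * V) * (Matrix.diagonal (fun i => ((hσ.1.eigenvalues i ^ (-t) : ℝ) : ℂ))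
            * star V))) := by
        simp only [Matrix.mul_assoc]
    _ = V * (Matrix.diagonal (fun i => ((hσ.1.eigenvalues i ^ t : ℝ) : ℂ)) *
          Matrix.diagonal (fun i => ((hσ.1.eigenvalues i ^ (-t) : ℝ) : ℂ))) * star V := by
        rw [hV2, Matrix.one_mul]; simp only [Matrix.mul_assoc]
    _ = V * star V := by
        rw [Matrix.diagonal_mul_diagonal]
        have : (fun i => ((hσ.1.eigenvalues i ^ t : ℝ) : ℂ) *
            ((hσ.1.eigenvalues i ^ (-t) : ℝ) : ℂ)) = fun _ => (1 : ℂ) := by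
          funext i
          have hpos : 0 < hσ.1.eigenvalues i := hσ.eigenvalues_pos i
          rw [← Complex.ofReal_mul, ← Real.rpow_add hpos]
          simp
        rw [this, Matrix.diagonal_one, Matrix.mul_one]
    _ = 1 := hV1

lemma mpow_neg_mul_mpow {n : ℕ} {σ : Matrix (Fin n) (Fin n) ℂ} (hσ : σ.PosDef) (t : ℝ) :
    mpow hσ.1 (-t) * mpow hσ.1 t = 1 := by
  have := mpow_mul_mpow_neg hσ (-t)
  rwa [neg_neg] at this

/-- For a full-rank density matrix `σ` and density matrices `ρ₁, ρ₂`,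
`‖ρ₁ - ρ₂‖₁ ≤ ‖σ^{1/4}(σ^{-1/4}√ρ₁σ^{-1/4} - σ^{-1/4}√ρ₂σ^{-1/4})σ^{1/4}‖₂ ⬝ ‖√ρ₁ + √ρ₂‖₂`. -/
theorem traceNorm_sub_le_hsNorm_mul_hsNorm {n : ℕ} (σ ρ₁ ρ₂ : Matrix (Fin n) (Fin n) ℂ)
    (hσ : σ.PosDef) (hσtr : σ.trace = 1)
    (hρ₁ : ρ₁.PosSemidef) (hρ₁tr : ρ₁.trace = 1)
    (hρ₂ : ρ₂.PosSemidef) (hρ₂tr : ρ₂.trace = 1) :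
    traceNorm (ρ₁ - ρ₂) ≤
      hsNorm (mpow hσ.1 (1/4 : ℝ) *
          (mpow hσ.1 (-(1/4) : ℝ) * hρ₁.sqrt * mpow hσ.1 (-(1/4) : ℝ)
            - mpow hσ.1 (-(1/4) : ℝ) * hρ₂.sqrt * mpow hσ.1 (-(1/4) : ℝ)) *
          mpow hσ.1 (1/4 : ℝ)) *
        hsNorm (hρ₁.sqrt + hρ₂.sqrt) := by
  set A := hρ₁.sqrt with hAdef
  set B := hρ₂.sqrt with hBdef
  set P := mpow hσ.1 (1/4 : ℝ) with hPdef
  set N := mpow hσ.1 (-(1/4) : ℝ) with hNdef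
  have hPN : P * N = 1 := mpow_mul_mpow_neg hσ (1/4)
  have hNP : N * P = 1 := mpow_neg_mul_mpow hσ (1/4)
  -- simplify the big conjugated expression
  have hcancel : ∀ M : Matrix (Fin n) (Fin n) ℂ, P * (N * M * N) * P = M := by
    intro M
    calc P * (N * M * N) * P = (P * N) * M * (N * P) := by simp only [Matrix.mul_assoc]
      _ = M := by rw [hPN, hNP, Matrix.one_mul, Matrix.mul_one]
  have hsimp : P * (N * A * N - N * B * N) * P = A - B := by
    rw [Matrix.mul_sub, Matrix.sub_mul, hcancel A, hcancel B]
  rw [hsimp]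
  -- now the main inequality
  set D := ρ₁ - ρ₂ with hDdef
  have hD : D.IsHermitian := hρ₁.1.sub hρ₂.1
  set V : Matrix (Fin n) (Fin n) ℂ := (hD.eigenvectorUnitary : Matrix (Fin n) (Fin n) ℂ)
    with hVdef
  have hV1 : V * Vᴴ = 1 := by
    rw [← Matrix.star_eq_conjTranspose]; exact Unitary.coe_mul_star_self _
  have hdiag : Vᴴ * D * V = Matrix.diagonal (fun i => ((hD.eigenvalues i : ℝ) : ℂ)) := by
    rw [← Matrix.star_eq_conjTranspose]
    have h := hD.conjStarAlgAut_star_eigenvectorUnitary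
    rw [Unitary.conjStarAlgAut_star_apply] at h
    exact h
  have hAA : A * A = ρ₁ := hρ₁.sqrt_mul_self
  have hBB : B * B = ρ₂ := hρ₂.sqrt_mul_self
  have hiden : (A - B) * (A + B) + (A + B) * (A - B) = D + D := by
    have h1 : (A - B) * (A + B) + (A + B) * (A - B) = A * A + A * A - (B * B + B * B) := by
      noncomm_ring
    rw [h1, hAA, hBB, hDdef]
    abel
  have hgen : ∀ M N' : Matrix (Fin n) (Fin n) ℂ,
      Vᴴ * (M + N') * V = Vᴴ * M * V + Vᴴ * N' * V := by
    intro M N'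
    noncomm_ring
  have hsum : Vᴴ * ((A - B) * (A + B)) * V + Vᴴ * ((A + B) * (A - B)) * V
      = Vᴴ * D * V + Vᴴ * D * V := by
    rw [← hgen, hiden, hgen]
  have key : ∀ i, |hD.eigenvalues i| + |hD.eigenvalues i| ≤
      ‖(Vᴴ * ((A - B) * (A + B)) * V) i i‖ +
      ‖(Vᴴ * ((A + B) * (A - B)) * V) i i‖ := by
    intro i
    have h1 : ((Vᴴ * ((A - B) * (A + B)) * V) i i) + ((Vᴴ * ((A + B) * (A - B)) * V) i i)
        = ((hD.eigenvalues i : ℝ) : ℂ) + ((hD.eigenvalues i : ℝ) : ℂ) := by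
      have := congrFun (congrFun hsum i) i
      simpa [Matrix.add_apply, hdiag, Matrix.diagonal_apply_eq] using this
    have h2 : |hD.eigenvalues i| + |hD.eigenvalues i|
        = ‖((hD.eigenvalues i : ℝ) : ℂ) + ((hD.eigenvalues i : ℝ) : ℂ)‖ := by
      rw [← Complex.ofReal_add, Complex.norm_real, Real.norm_eq_abs,
        show hD.eigenvalues i + hD.eigenvalues i = 2 * hD.eigenvalues i from (two_mul _).symm,
        abs_mul, abs_two, two_mul]
    rw [h2, ← h1]
    exact norm_add_le _ _
  have hsum1 : ∑ i, ‖(Vᴴ * ((A - B) * (A + B)) * V) i i‖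
      ≤ hsNorm (A - B) * hsNorm (A + B) := sum_abs_diag_le V (A - B) (A + B) hV1
  have hsum2 : ∑ i, ‖(Vᴴ * ((A + B) * (A - B)) * V) i i‖
      ≤ hsNorm (A + B) * hsNorm (A - B) := sum_abs_diag_le V (A + B) (A - B) hV1
  have htn : traceNorm D = ∑ i, |hD.eigenvalues i| := traceNorm_eq_sum_abs_eigenvalues hD
  have htot : ∑ i, (|hD.eigenvalues i| + |hD.eigenvalues i|) ≤
      hsNorm (A - B) * hsNorm (A + B) + hsNorm (A + B) * hsNorm (A - B) := by
    calc ∑ i, (|hD.eigenvalues i| + |hD.eigenvalues i|)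
        ≤ ∑ i, (‖(Vᴴ * ((A - B) * (A + B)) * V) i i‖ +
            ‖(Vᴴ * ((A + B) * (A - B)) * V) i i‖) :=
          Finset.sum_le_sum fun i _ => key i
      _ = (∑ i, ‖(Vᴴ * ((A - B) * (A + B)) * V) i i‖) +
            ∑ i, ‖(Vᴴ * ((A + B) * (A - B)) * V) i i‖ :=
          Finset.sum_add_distrib
      _ ≤ hsNorm (A - B) * hsNorm (A + B) + hsNorm (A + B) * hsNorm (A - B) :=
          add_le_add hsum1 hsum2
  rw [Finset.sum_add_distrib] at htot
  rw [htn]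
  nlinarith [mul_comm (hsNorm (A + B)) (hsNorm (A - B))]
end

section
/- Let σ ∈ M_n(ℂ) be positive definite. Define M(X) = ∫_0^1 σ^{1-s} X σ^s ds on M_n(ℂ). Then M is invertible with inverse M^{-1}(X) = ∫_0^∞ (σ + t·I)^{-1} X (σ + t·I)^{-1} dt. -/
open Matrix MeasureTheory
open scoped ComplexOrder
open Set Filter Topology intervalIntegral Real

section scalarpart

noncomputable def coefF (a b : ℝ) : ℝ := ∫ s in (0:ℝ)..1, a ^ (1-s) * b ^ s

noncomputable def coefG (a b : ℝ) : ℝ := ∫ t in Set.Ioi (0:ℝ), ((a+t)*(b+t))⁻¹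

lemma rpow_prod_eq {a b : ℝ} (ha : 0 < a) (hb : 0 < b) (s : ℝ) :
    a ^ (1-s) * b ^ s = a * Real.exp (s * (Real.log b - Real.log a)) := by
  rw [Real.rpow_def_of_pos ha, Real.rpow_def_of_pos hb, ← Real.exp_add]
  conv_rhs => rw [← Real.exp_log ha]
  rw [← Real.exp_add]
  rw [Real.log_exp]; congr 1; ring

lemma continuous_rpow_prod {a b : ℝ} (ha : 0 < a) (hb : 0 < b) :
    Continuous fun s : ℝ => a ^ (1-s) * b ^ s := by
  have : (fun s : ℝ => a ^ (1-s) * b ^ s)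
      = fun s => a * Real.exp (s * (Real.log b - Real.log a)) :=
    funext fun s => rpow_prod_eq ha hb s
  rw [this]; fun_prop

lemma coefF_eq_of_ne {a b : ℝ} (ha : 0 < a) (hb : 0 < b) (hab : a ≠ b) :
    coefF a b = (b - a) / (Real.log b - Real.log a) := by
  have hc : Real.log b - Real.log a ≠ 0 := by
    intro h
    exact hab.symm (Real.log_injOn_pos (mem_Ioi.2 hb) (mem_Ioi.2 ha) (by linarith [sub_eq_zero.1 h]))
  set c := Real.log b - Real.log a with hcdef
  have : coefF a b = ∫ s in (0:ℝ)..1, a * Real.exp (s * c) := by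
    unfold coefF
    exact intervalIntegral.integral_congr fun s _ => rpow_prod_eq ha hb s
  rw [this, intervalIntegral.integral_const_mul]
  have h2 : (∫ s in (0:ℝ)..1, Real.exp (s * c)) = c⁻¹ * (Real.exp c - 1) := by
    have h := intervalIntegral.mul_integral_comp_mul_right (a:=(0:ℝ)) (b:=1) (f:=Real.exp) (c:=c)
    rw [integral_exp] at h
    simp only [zero_mul, one_mul, Real.exp_zero] at h
    rw [← h, inv_mul_cancel_left₀ hc]
  rw [h2]
  have he : Real.exp c = b / a := by
    rw [hcdef, Real.exp_sub, Real.exp_log ha, Real.exp_log hb]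
  rw [he]
  field_simp

lemma coefF_eq_of_eq {a : ℝ} (ha : 0 < a) : coefF a a = a := by
  have : coefF a a = ∫ s in (0:ℝ)..1, a * Real.exp (s * (Real.log a - Real.log a)) := by
    unfold coefF
    exact intervalIntegral.integral_congr fun s _ => rpow_prod_eq ha ha s
  simp [this]

lemma coefG_antideriv {a b : ℝ} (ha : 0 < a) (hb : 0 < b) :
    ∃ g : ℝ → ℝ, (∀ x ∈ Ici (0:ℝ), HasDerivAt g (((a+x)*(b+x))⁻¹) x)
      ∧ Tendsto g atTop (𝓝 0) ∧ coefF a b * (0 - g 0) = 1 := by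
  have h0 : Tendsto (fun t : ℝ => (a+t)⁻¹) atTop (𝓝 0) :=
    tendsto_inv_atTop_zero.comp (tendsto_atTop_add_const_left _ a tendsto_id)
  rcases eq_or_ne a b with rfl | hab
  · refine ⟨fun t => -(a+t)⁻¹, fun x hx => ?_, ?_, ?_⟩
    · have hx0 : (0:ℝ) ≤ x := hx
      have ha' : a + x ≠ 0 := by positivity
      have h1 : HasDerivAt (fun t : ℝ => a + t) 1 x := (hasDerivAt_id x).const_add a
      have h2 := ((hasDerivAt_inv ha').comp x h1).neg
      refine h2.congr_deriv ?_
      field_simp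
    · simpa using h0.neg
    · rw [coefF_eq_of_eq ha]
      simp only [add_zero, sub_neg_eq_add, zero_add]
      field_simp
  · refine ⟨fun t => (a-b)⁻¹ * (Real.log (b+t) - Real.log (a+t)), fun x hx => ?_, ?_, ?_⟩
    · have hx0 : (0:ℝ) ≤ x := hx
      have ha' : a + x ≠ 0 := by positivity
      have hb' : b + x ≠ 0 := by positivity
      have h1 : HasDerivAt (fun t : ℝ => a + t) 1 x := (hasDerivAt_id x).const_add a
      have h1' : HasDerivAt (fun t : ℝ => b + t) 1 x := (hasDerivAt_id x).const_add b
      have h2 := (((Real.hasDerivAt_log hb').comp x h1').sub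
        ((Real.hasDerivAt_log ha').comp x h1)).const_mul ((a-b)⁻¹)
      refine h2.congr_deriv ?_
      have hab' : a - b ≠ 0 := sub_ne_zero.2 hab
      field_simp
      ring
    · have hratio : Tendsto (fun t : ℝ => (b+t)/(a+t)) atTop (𝓝 1) := by
        have h2 : Tendsto (fun t : ℝ => 1 + (b-a)*(a+t)⁻¹) atTop (𝓝 1) := by
          have := tendsto_const_nhds (x := (1:ℝ)) (f := atTop) |>.add (h0.const_mul (b-a))
          simpa using this
        refine h2.congr' ?_
        filter_upwards [eventually_gt_atTop 0] with t ht
        have ha' : a + t ≠ 0 := by positivity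
        field_simp
        ring
      have hlog : Tendsto (fun t : ℝ => Real.log ((b+t)/(a+t))) atTop (𝓝 0) := by
        have := (Real.continuousAt_log one_ne_zero).tendsto.comp hratio
        simpa [Function.comp_def] using this
      have := hlog.const_mul ((a-b)⁻¹)
      rw [mul_zero] at this
      refine this.congr' ?_
      filter_upwards [eventually_gt_atTop 0] with t ht
      have ha' : a + t ≠ 0 := by positivity
      have hb' : b + t ≠ 0 := by positivity
      rw [Real.log_div hb' ha']
    · rw [coefF_eq_of_ne ha hb hab]
      have hab' : a - b ≠ 0 := sub_ne_zero.2 hab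
      have hc : Real.log b - Real.log a ≠ 0 := by
        intro h
        exact hab.symm (Real.log_injOn_pos (mem_Ioi.2 hb) (mem_Ioi.2 ha) (by linarith [sub_eq_zero.1 h]))
      simp only [add_zero]
      field_simp
      ring

lemma coefG_nonneg {a b : ℝ} (ha : 0 < a) (hb : 0 < b) :
    ∀ x ∈ Ioi (0:ℝ), 0 ≤ ((a+x)*(b+x))⁻¹ := by
  intro x hx
  have : (0:ℝ) < x := hx
  positivity

lemma coefG_integrableOn {a b : ℝ} (ha : 0 < a) (hb : 0 < b) :
    IntegrableOn (fun t => ((a+t)*(b+t))⁻¹) (Ioi (0:ℝ)) := by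
  obtain ⟨g, h1, h2, _⟩ := coefG_antideriv ha hb
  exact integrableOn_Ioi_deriv_of_nonneg' h1 (coefG_nonneg ha hb) h2

lemma coefF_mul_coefG {a b : ℝ} (ha : 0 < a) (hb : 0 < b) :
    coefF a b * coefG a b = 1 := by
  obtain ⟨g, h1, h2, h3⟩ := coefG_antideriv ha hb
  have : coefG a b = 0 - g 0 :=
    integral_Ioi_of_hasDerivAt_of_nonneg' h1 (coefG_nonneg ha hb) h2
  rw [this]
  exact h3

end scalarpart


/-- The BKM multiplication operator `M(X) = ∫_0^1 σ^{1-s} X σ^s ds` (entrywise integral). -/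
noncomputable def bkmM {n : ℕ} {σ : Matrix (Fin n) (Fin n) ℂ} (hσ : σ.IsHermitian)
    (X : Matrix (Fin n) (Fin n) ℂ) : Matrix (Fin n) (Fin n) ℂ :=
  Matrix.of fun i j => ∫ s in (0:ℝ)..1, (mpow hσ (1 - s) * X * mpow hσ s) i j

/-- The candidate inverse `M⁻¹(X) = ∫_0^∞ (σ + t I)⁻¹ X (σ + t I)⁻¹ dt` (entrywise integral). -/
noncomputable def bkmMinv {n : ℕ} (σ : Matrix (Fin n) (Fin n) ℂ)
    (X : Matrix (Fin n) (Fin n) ℂ) : Matrix (Fin n) (Fin n) ℂ :=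
  Matrix.of fun i j =>
    ∫ t in Set.Ioi (0:ℝ),
      ((σ + (t : ℂ) • (1 : Matrix (Fin n) (Fin n) ℂ))⁻¹ * X *
        (σ + (t : ℂ) • (1 : Matrix (Fin n) (Fin n) ℂ))⁻¹) i j

section matrixpart

variable {n : ℕ}

lemma conj_entry (U Z : Matrix (Fin n) (Fin n) ℂ) (i j : Fin n) :
    (U * Z * star U) i j = ∑ k, ∑ l, U i k * Z k l * (star U) l j := by
  simp only [Matrix.mul_apply, Finset.sum_mul]
  rw [Finset.sum_comm]

lemma sandwich_eq (U X : Matrix (Fin n) (Fin n) ℂ) (d e : Fin n → ℂ) :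
    (U * Matrix.diagonal d * star U) * X * (U * Matrix.diagonal e * star U)
      = U * (Matrix.diagonal d * (star U * X * U) * Matrix.diagonal e) * star U := by
  simp only [Matrix.mul_assoc]

lemma sandwich_apply (U X : Matrix (Fin n) (Fin n) ℂ) (d e : Fin n → ℂ) (i j : Fin n) :
    ((U * Matrix.diagonal d * star U) * X * (U * Matrix.diagonal e * star U)) i j
      = ∑ k, ∑ l, d k * e l * (U i k * (star U * X * U) k l * (star U) l j) := by
  rw [sandwich_eq, conj_entry]
  refine Finset.sum_congr rfl fun k _ => Finset.sum_congr rfl fun l _ => ?_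
  simp only [Matrix.diagonal_mul, Matrix.mul_diagonal]
  ring

lemma sandwich_mul {U : Matrix (Fin n) (Fin n) ℂ} (hU' : star U * U = 1)
    (A B : Matrix (Fin n) (Fin n) ℂ) :
    (U * A * star U) * (U * B * star U) = U * (A * B) * star U := by
  simp only [Matrix.mul_assoc]
  rw [show star U * (U * (B * star U)) = B * star U by rw [← Matrix.mul_assoc, hU', Matrix.one_mul]]

lemma inner_cancel {U : Matrix (Fin n) (Fin n) ℂ} (hU' : star U * U = 1)
    (A : Matrix (Fin n) (Fin n) ℂ) :
    star U * (U * A * star U) * U = A := by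
  calc star U * (U * A * star U) * U = (star U * U) * A * (star U * U) := by
        simp only [Matrix.mul_assoc]
    _ = A := by rw [hU', Matrix.one_mul, Matrix.mul_one]

lemma outer_cancel {U : Matrix (Fin n) (Fin n) ℂ} (hU : U * star U = 1)
    (X : Matrix (Fin n) (Fin n) ℂ) :
    U * (star U * X * U) * star U = X := by
  calc U * (star U * X * U) * star U = (U * star U) * X * (U * star U) := by
        simp only [Matrix.mul_assoc]
    _ = X := by rw [hU, Matrix.one_mul, Matrix.mul_one]

variable {σ : Matrix (Fin n) (Fin n) ℂ} (hσ : σ.PosDef)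

lemma resolvent_eq {t : ℝ} (ht : 0 < t) :
    (σ + (t : ℂ) • (1 : Matrix (Fin n) (Fin n) ℂ))⁻¹
      = (hσ.1.eigenvectorUnitary : Matrix (Fin n) (Fin n) ℂ) *
          Matrix.diagonal (fun k => (((hσ.1.eigenvalues k + t)⁻¹ : ℝ) : ℂ)) *
          (star hσ.1.eigenvectorUnitary : Matrix (Fin n) (Fin n) ℂ) := by
  set U := (hσ.1.eigenvectorUnitary : Matrix (Fin n) (Fin n) ℂ) with hUdef
  have hU : U * star U = 1 := (Matrix.mem_unitaryGroup_iff).mp hσ.1.eigenvectorUnitary.2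
  have hU' : star U * U = 1 := (Matrix.mem_unitaryGroup_iff').mp hσ.1.eigenvectorUnitary.2
  have hd : Matrix.diagonal (fun _ : Fin n => (t : ℂ)) = (t : ℂ) • 1 := by
    ext i j
    simp [Matrix.diagonal_apply, Matrix.one_apply, mul_ite, apply_ite ((t:ℂ) * ·)]
  have hst : σ + (t : ℂ) • (1 : Matrix (Fin n) (Fin n) ℂ)
      = U * Matrix.diagonal (fun k => (((hσ.1.eigenvalues k + t : ℝ)) : ℂ)) * star U := by
    have h1 : (t : ℂ) • (1 : Matrix (Fin n) (Fin n) ℂ)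
        = U * Matrix.diagonal (fun _ => (t : ℂ)) * star U := by
      rw [hd, Matrix.mul_smul, Matrix.mul_one, Matrix.smul_mul, hU]
    conv_lhs => rw [hσ.1.spectral_theorem, h1]
    rw [Unitary.conjStarAlgAut_apply]
    rw [← hUdef, ← Matrix.add_mul, ← Matrix.mul_add, Matrix.diagonal_add]
    congr 2 with k
    push_cast
    simp [Function.comp]
  rw [hst]
  apply Matrix.inv_eq_right_inv
  rw [sandwich_mul hU', Matrix.diagonal_mul_diagonal]
  have hone : ∀ k, (((hσ.1.eigenvalues k + t : ℝ)) : ℂ)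
      * (((hσ.1.eigenvalues k + t)⁻¹ : ℝ) : ℂ) = 1 := by
    intro k
    have hk := hσ.eigenvalues_pos k
    rw [← Complex.ofReal_mul, mul_inv_cancel₀ (by positivity), Complex.ofReal_one]
  have hdiag : Matrix.diagonal (fun i => (((hσ.1.eigenvalues i + t : ℝ)) : ℂ)
      * (((hσ.1.eigenvalues i + t)⁻¹ : ℝ) : ℂ)) = 1 := by
    rw [show (fun i => (((hσ.1.eigenvalues i + t : ℝ)) : ℂ)
      * (((hσ.1.eigenvalues i + t)⁻¹ : ℝ) : ℂ)) = (fun _ => (1:ℂ)) from funext hone,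
      Matrix.diagonal_one]
  rw [hdiag, Matrix.mul_one, hU]


lemma bkmM_eq (X : Matrix (Fin n) (Fin n) ℂ) :
    bkmM hσ.1 X = (hσ.1.eigenvectorUnitary : Matrix (Fin n) (Fin n) ℂ) *
      (Matrix.of fun k l => ((coefF (hσ.1.eigenvalues k) (hσ.1.eigenvalues l) : ℝ) : ℂ) *
        ((star hσ.1.eigenvectorUnitary : Matrix (Fin n) (Fin n) ℂ) * X *
          (hσ.1.eigenvectorUnitary : Matrix (Fin n) (Fin n) ℂ)) k l) *
      (star hσ.1.eigenvectorUnitary : Matrix (Fin n) (Fin n) ℂ) := by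
  set U := (hσ.1.eigenvectorUnitary : Matrix (Fin n) (Fin n) ℂ) with hUdef
  set lam := hσ.1.eigenvalues with hlam
  set Y := star U * X * U with hY
  ext i j
  have hpt : ∀ s : ℝ, (mpow hσ.1 (1-s) * X * mpow hσ.1 s) i j
      = ∑ k, ∑ l, (((lam k ^ (1-s) * lam l ^ s : ℝ)) : ℂ)
          * (U i k * Y k l * (star U) l j) := by
    intro s
    simp only [mpow, ← hUdef, ← hlam]
    rw [sandwich_apply]
    refine Finset.sum_congr rfl fun k _ => Finset.sum_congr rfl fun l _ => ?_
    rw [← hY]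
    push_cast
    ring
  have hcont : ∀ k l : Fin n, Continuous fun s : ℝ =>
      (((lam k ^ (1-s) * lam l ^ s : ℝ)) : ℂ) * (U i k * Y k l * (star U) l j) :=
    fun k l => (Complex.continuous_ofReal.comp
      (continuous_rpow_prod (hσ.eigenvalues_pos k) (hσ.eigenvalues_pos l))).mul continuous_const
  have : bkmM hσ.1 X i j = ∫ s in (0:ℝ)..1, ∑ k, ∑ l,
      (((lam k ^ (1-s) * lam l ^ s : ℝ)) : ℂ) * (U i k * Y k l * (star U) l j) := by
    simp only [bkmM, Matrix.of_apply]
    exact intervalIntegral.integral_congr fun s _ => hpt s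
  rw [this, conj_entry]
  rw [intervalIntegral.integral_finset_sum
    (fun k _ => ((continuous_finset_sum _ fun l _ => hcont k l).intervalIntegrable _ _))]
  refine Finset.sum_congr rfl fun k _ => ?_
  rw [intervalIntegral.integral_finset_sum (fun l _ => (hcont k l).intervalIntegrable _ _)]
  refine Finset.sum_congr rfl fun l _ => ?_
  rw [intervalIntegral.integral_mul_const, intervalIntegral.integral_ofReal]
  show (coefF (lam k) (lam l) : ℂ) * _ = _
  simp only [Matrix.of_apply]
  ring

lemma bkmMinv_eq (X : Matrix (Fin n) (Fin n) ℂ) :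
    bkmMinv σ X = (hσ.1.eigenvectorUnitary : Matrix (Fin n) (Fin n) ℂ) *
      (Matrix.of fun k l => ((coefG (hσ.1.eigenvalues k) (hσ.1.eigenvalues l) : ℝ) : ℂ) *
        ((star hσ.1.eigenvectorUnitary : Matrix (Fin n) (Fin n) ℂ) * X *
          (hσ.1.eigenvectorUnitary : Matrix (Fin n) (Fin n) ℂ)) k l) *
      (star hσ.1.eigenvectorUnitary : Matrix (Fin n) (Fin n) ℂ) := by
  set U := (hσ.1.eigenvectorUnitary : Matrix (Fin n) (Fin n) ℂ) with hUdef
  set lam := hσ.1.eigenvalues with hlam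
  set Y := star U * X * U with hY
  ext i j
  have hint : ∀ k l : Fin n, IntegrableOn (fun t : ℝ =>
      ((((lam k + t) * (lam l + t))⁻¹ : ℝ) : ℂ) * (U i k * Y k l * (star U) l j))
      (Set.Ioi (0:ℝ)) :=
    fun k l => ((coefG_integrableOn (hσ.eigenvalues_pos k) (hσ.eigenvalues_pos l)).ofReal).mul_const _
  have : bkmMinv σ X i j = ∫ t in Set.Ioi (0:ℝ), ∑ k, ∑ l,
      ((((lam k + t) * (lam l + t))⁻¹ : ℝ) : ℂ) * (U i k * Y k l * (star U) l j) := by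
    simp only [bkmMinv, Matrix.of_apply]
    refine setIntegral_congr_fun measurableSet_Ioi fun t ht => ?_
    rw [resolvent_eq hσ ht, ← hUdef, ← hlam, sandwich_apply]
    refine Finset.sum_congr rfl fun k _ => Finset.sum_congr rfl fun l _ => ?_
    rw [← hY, ← mul_assoc, ← Complex.ofReal_mul, ← mul_inv]
    ring
  rw [this, conj_entry]
  rw [MeasureTheory.integral_finset_sum _
    (fun k _ => integrable_finset_sum _ fun l _ => hint k l)]
  refine Finset.sum_congr rfl fun k _ => ?_
  rw [MeasureTheory.integral_finset_sum _ (fun l _ => hint k l)]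
  refine Finset.sum_congr rfl fun l _ => ?_
  rw [MeasureTheory.integral_mul_const]
  have hG : ((coefG (lam k) (lam l) : ℝ) : ℂ)
      = ∫ a in Set.Ioi (0:ℝ), ((((lam k + a) * (lam l + a))⁻¹ : ℝ) : ℂ) :=
    (_root_.integral_ofReal).symm
  simp only [Matrix.of_apply]
  rw [hG]
  ring

/-- For positive definite `σ`, `M(X) = ∫_0^1 σ^{1-s} X σ^s ds` is invertible with inverse
`M⁻¹(X) = ∫_0^∞ (σ + t I)⁻¹ X (σ + t I)⁻¹ dt`. -/
theorem bkmM_inverse {n : ℕ} (σ : Matrix (Fin n) (Fin n) ℂ) (hσ : σ.PosDef) :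
    (∀ X, bkmMinv σ (bkmM hσ.1 X) = X) ∧ (∀ X, bkmM hσ.1 (bkmMinv σ X) = X) := by
  set U := (hσ.1.eigenvectorUnitary : Matrix (Fin n) (Fin n) ℂ) with hUdef
  set lam := hσ.1.eigenvalues with hlam
  have hU : U * star U = 1 := (Matrix.mem_unitaryGroup_iff).mp hσ.1.eigenvectorUnitary.2
  have hU' : star U * U = 1 := (Matrix.mem_unitaryGroup_iff').mp hσ.1.eigenvectorUnitary.2
  have hcoef : ∀ k l : Fin n, ((coefF (lam k) (lam l) : ℝ) : ℂ)
      * ((coefG (lam k) (lam l) : ℝ) : ℂ) = 1 := by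
    intro k l
    rw [← Complex.ofReal_mul, coefF_mul_coefG (hσ.eigenvalues_pos k) (hσ.eigenvalues_pos l),
      Complex.ofReal_one]
  constructor
  · intro X
    rw [bkmM_eq hσ, bkmMinv_eq hσ, ← hUdef, ← hlam]
    rw [show star U * (U * (Matrix.of fun k l =>
        ((coefF (lam k) (lam l) : ℝ) : ℂ) * (star U * X * U) k l) * star U) * U
      = Matrix.of fun k l => ((coefF (lam k) (lam l) : ℝ) : ℂ) * (star U * X * U) k l
      from inner_cancel hU' _]
    have : (Matrix.of fun k l => ((coefG (lam k) (lam l) : ℝ) : ℂ) *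
        (Matrix.of fun k l => ((coefF (lam k) (lam l) : ℝ) : ℂ) * (star U * X * U) k l) k l)
        = star U * X * U := by
      ext k l
      simp only [Matrix.of_apply]
      rw [← mul_assoc, mul_comm (((coefG (lam k) (lam l) : ℝ) : ℂ)), hcoef k l, one_mul]
    rw [this, outer_cancel hU]
  · intro X
    rw [bkmMinv_eq hσ, bkmM_eq hσ, ← hUdef, ← hlam]
    rw [show star U * (U * (Matrix.of fun k l =>
        ((coefG (lam k) (lam l) : ℝ) : ℂ) * (star U * X * U) k l) * star U) * U
      = Matrix.of fun k l => ((coefG (lam k) (lam l) : ℝ) : ℂ) * (star U * X * U) k l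
      from inner_cancel hU' _]
    have : (Matrix.of fun k l => ((coefF (lam k) (lam l) : ℝ) : ℂ) *
        (Matrix.of fun k l => ((coefG (lam k) (lam l) : ℝ) : ℂ) * (star U * X * U) k l) k l)
        = star U * X * U := by
      ext k l
      simp only [Matrix.of_apply]
      rw [← mul_assoc, hcoef k l, one_mul]
    rw [this, outer_cancel hU]

end matrixpart
end
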